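/- Let (X₁, d₁) and (X₂, d₂) be distance spaces with X₁ ∩ X₂ = {x₀}, and let (X₁ ∪ X₂, d) be their 1-sum, defined by d(x,y) = d₁(x,y) if x,y ∈ X₁; d(x,y) = d₂(x,y) if x,y ∈ X₂; and d(x,y) = d₁(x,x₀) + d₂(x₀,y) if x ∈ X₁, y ∈ X₂. If there exist Hilbert spaces H₁, H₂ and maps φᵢ : Xᵢ → Hᵢ with dᵢ(x,y) = ‖φᵢ(x) - φᵢ(y)‖²_{Hᵢ} for i = 1,2, then there exists a Hilbert space H and a map φ : X₁ ∪ X₂ → H with d(x,y) = ‖φ(x) - φ(y)‖²_H for all x, y ∈ X₁ ∪ X₂. -/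

import Mathlib

open Set

noncomputable instance ULift.instInnerAux {H : Type*} [NormedAddCommGroup H]
    [InnerProductSpace ℝ H] : Inner ℝ (ULift.{u} H) :=
  ⟨fun x y => inner ℝ x.down y.down⟩

noncomputable instance ULift.instInnerProductSpaceAux {H : Type*} [NormedAddCommGroup H]
    [InnerProductSpace ℝ H] : InnerProductSpace ℝ (ULift.{u} H) where
  norm_sq_eq_re_inner x := InnerProductSpace.norm_sq_eq_re_inner x.down
  conj_inner_symm x y := InnerProductSpace.conj_inner_symm x.down y.down
  add_left x y z := InnerProductSpace.add_left x.down y.down z.down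
  smul_left x y r := InnerProductSpace.smul_left x.down y.down r


theorem stmt8 {X : Type*} (A B : Set X) (x₀ : X)
    (hU : A ∪ B = univ) (hI : A ∩ B = {x₀})
    (d₁ d₂ d : X → X → ℝ)
    -- `d₁` is a distance on `A`, `d₂` a distance on `B`
    (h₁symm : ∀ x ∈ A, ∀ y ∈ A, d₁ x y = d₁ y x)
    (h₁nonneg : ∀ x ∈ A, ∀ y ∈ A, 0 ≤ d₁ x y)
    (h₁zero : ∀ x ∈ A, ∀ y ∈ A, (d₁ x y = 0 ↔ x = y))
    (h₂symm : ∀ x ∈ B, ∀ y ∈ B, d₂ x y = d₂ y x)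
    (h₂nonneg : ∀ x ∈ B, ∀ y ∈ B, 0 ≤ d₂ x y)
    (h₂zero : ∀ x ∈ B, ∀ y ∈ B, (d₂ x y = 0 ↔ x = y))
    -- `d` is the 1-sum of `(A, d₁)` and `(B, d₂)`
    (hdA : ∀ x ∈ A, ∀ y ∈ A, d x y = d₁ x y)
    (hdB : ∀ x ∈ B, ∀ y ∈ B, d x y = d₂ x y)
    (hdAB : ∀ x ∈ A, ∀ y ∈ B, x ∉ B → y ∉ A →
      d x y = d₁ x x₀ + d₂ x₀ y ∧ d y x = d₁ x x₀ + d₂ x₀ y)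
    -- √-embeddings of `(A, d₁)` and `(B, d₂)` into Hilbert spaces
    {H₁ H₂ : Type*} [NormedAddCommGroup H₁] [InnerProductSpace ℝ H₁] [CompleteSpace H₁]
    [NormedAddCommGroup H₂] [InnerProductSpace ℝ H₂] [CompleteSpace H₂]
    (φ₁ : X → H₁) (hφ₁ : ∀ x ∈ A, ∀ y ∈ A, d₁ x y = ‖φ₁ x - φ₁ y‖ ^ 2)
    (φ₂ : X → H₂) (hφ₂ : ∀ x ∈ B, ∀ y ∈ B, d₂ x y = ‖φ₂ x - φ₂ y‖ ^ 2) :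
    ∃ (H : Type (max u_1 u_2 u_3)) (_ : NormedAddCommGroup H) (_ : InnerProductSpace ℝ H)
      (_ : CompleteSpace H) (φ : X → H), ∀ x y, d x y = ‖φ x - φ y‖ ^ 2 := by
  classical
  have hx₀ : x₀ ∈ A ∩ B := hI ▸ rfl
  have hx₀A : x₀ ∈ A := hx₀.1
  have hx₀B : x₀ ∈ B := hx₀.2
  have hmem : ∀ x : X, x ∉ A → x ∈ B := by
    intro x hx
    have : x ∈ A ∪ B := hU ▸ mem_univ x
    exact this.resolve_left hx
  have heq : ∀ x : X, x ∈ A → x ∈ B → x = x₀ := by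
    intro x hA hB
    have : x ∈ A ∩ B := ⟨hA, hB⟩
    rwa [hI] at this
  refine ⟨ULift.{u_1} (WithLp 2 (H₁ × H₂)), inferInstance, inferInstance, inferInstance,
    fun x => ULift.up ((WithLp.equiv 2 (H₁ × H₂)).symm
      (if x ∈ A then (φ₁ x - φ₁ x₀, 0) else (0, φ₂ x - φ₂ x₀))), ?_⟩
  intro x y
  set e := (WithLp.equiv 2 (H₁ × H₂)).symm with he
  have hn : ∀ (a c : H₁) (b f : H₂),
      ‖(ULift.up (e (a, b)) : ULift (WithLp 2 (H₁ × H₂))) - ULift.up (e (c, f))‖ ^ 2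
        = ‖a - c‖ ^ 2 + ‖b - f‖ ^ 2 := by
    intro a c b f
    have h1 : (ULift.up (e (a, b)) : ULift (WithLp 2 (H₁ × H₂))) - ULift.up (e (c, f))
        = ULift.up (e (a - c, b - f)) := rfl
    rw [h1, ULift.norm_def, WithLp.prod_norm_sq_eq_of_L2]
    rfl
  by_cases hx : x ∈ A <;> by_cases hy : y ∈ A
  · simp only [hx, hy, if_true, if_pos]
    rw [hn, hdA x hx y hy, hφ₁ x hx y hy, sub_sub_sub_cancel_right]
    simp
  · have hyB := hmem y hy
    simp only [hx, hy, if_pos, if_neg, if_true, if_false]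
    rw [hn]
    by_cases hxB : x ∈ B
    · have hxx := heq x hx hxB
      rw [hxx, hdB x₀ hx₀B y hyB, hφ₂ x₀ hx₀B y hyB]
      simp [norm_sub_rev]
    · rw [(hdAB x hx y hyB hxB hy).1, hφ₁ x hx x₀ hx₀A, hφ₂ x₀ hx₀B y hyB]
      simp [norm_sub_rev]
  · have hxB := hmem x hx
    simp only [hx, hy, if_pos, if_neg, if_true, if_false]
    rw [hn]
    by_cases hyB : y ∈ B
    · have hyy := heq y hy hyB
      rw [hyy, hdB x hxB x₀ hx₀B, hφ₂ x hxB x₀ hx₀B]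
      simp [norm_sub_rev]
    · rw [(hdAB y hy x hxB hyB hx).2, hφ₁ y hy x₀ hx₀A, hφ₂ x₀ hx₀B x hxB]
      simp [norm_sub_rev]
  · have hxB := hmem x hx
    have hyB := hmem y hy
    simp only [hx, hy, if_neg, if_false]
    rw [hn, hdB x hxB y hyB, hφ₂ x hxB y hyB, sub_sub_sub_cancel_right]
    simp
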